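/- arXiv:2402.13982 — 4 statements merged into one kernel-verified Lean document; each statement's English description precedes it below -/
import Mathlib

section
/- For any commutative ring D, if z1, z2, z3 are off-diagonal 2×2 matrices over D (matrices with zero diagonal entries), then z1·z2·z3 = z3·z2·z1. -/
theorem offdiag_triple_reverse (D : Type*) [CommRing D]
    (z₁ z₂ z₃ : Matrix (Fin 2) (Fin 2) D)
    (h₁ : z₁ 0 0 = 0 ∧ z₁ 1 1 = 0) (h₂ : z₂ 0 0 = 0 ∧ z₂ 1 1 = 0)
    (h₃ : z₃ 0 0 = 0 ∧ z₃ 1 1 = 0) :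
    z₁ * z₂ * z₃ = z₃ * z₂ * z₁ := by
  obtain ⟨a1, b1⟩ := h₁
  obtain ⟨a2, b2⟩ := h₂
  obtain ⟨a3, b3⟩ := h₃
  ext i j
  fin_cases i <;> fin_cases j <;>
    simp [Matrix.mul_apply, Fin.sum_univ_two, a1, b1, a2, b2, a3, b3] <;> ring
end

section
/- Let A = D[β_i, γ_i : i ∈ ℕ] over an integral domain D and Z_i = β_i e_{12} + γ_i e_{21} the generic off-diagonal matrices. The products Z_{i_1} Z_{j_1} ⋯ Z_{i_n} Ẑ_{j_n} with i_1 ≤ ⋯ ≤ i_n and j_1 ≤ ⋯ ≤ j_{n or n-1} (the last factor possibly missing), for distinct such index data, are D-linearly independent in M_2(A). -/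
open MvPolynomial

/-- Interleave two lists: `interleave [i₁,…] [j₁,…] = [i₁, j₁, i₂, j₂, …]`. -/
def interleave : List ℕ → List ℕ → List ℕ
  | [], ys => ys
  | x :: xs, ys => x :: interleave ys xs
termination_by xs ys => xs.length + ys.length
decreasing_by simp [Nat.add_comm]; omega

/-- The generic off-diagonal matrix. -/
noncomputable def Zm (D : Type*) [CommRing D] (i : ℕ) :
    Matrix (Fin 2) (Fin 2) (MvPolynomial (ℕ ⊕ ℕ) D) :=
  !![0, X (Sum.inl i); X (Sum.inr i), 0]

/-- Alternating exponent function. -/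
noncomputable def Efun : Bool → List ℕ → ((ℕ ⊕ ℕ) →₀ ℕ)
  | _, [] => 0
  | b, x :: l =>
      Finsupp.single (if b then Sum.inl x else Sum.inr x) 1 + Efun (!b) l

lemma Efun_nil (b : Bool) : Efun b [] = 0 := rfl

lemma Efun_cons (b : Bool) (x : ℕ) (l : List ℕ) :
    Efun b (x :: l) =
      Finsupp.single (if b then Sum.inl x else Sum.inr x) 1 + Efun (!b) l := rfl

lemma Zprod_entries (D : Type*) [CommRing D] (l : List ℕ) :
    (((l.map (Zm D)).prod) 0 0 + ((l.map (Zm D)).prod) 0 1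
        = monomial (Efun true l) (1 : D)) ∧
    (((l.map (Zm D)).prod) 1 0 + ((l.map (Zm D)).prod) 1 1
        = monomial (Efun false l) (1 : D)) := by
  induction l with
  | nil =>
      simp [Efun_nil, Matrix.one_apply, monomial_zero']
  | cons x l ih =>
      obtain ⟨h0, h1⟩ := ih
      have key : ∀ (s : ℕ ⊕ ℕ) (f : (ℕ ⊕ ℕ) →₀ ℕ),
          (X s : MvPolynomial (ℕ ⊕ ℕ) D) * monomial f 1
            = monomial (Finsupp.single s 1 + f) 1 := by
        intro s f
        rw [X, monomial_mul, one_mul]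
      constructor
      · simp only [List.map_cons, List.prod_cons, Matrix.mul_apply, Fin.sum_univ_two, Zm,
          Matrix.cons_val', Matrix.cons_val_zero, Matrix.cons_val_one, Matrix.head_cons,
          Matrix.empty_val', Matrix.cons_val_fin_one, Matrix.head_fin_const, Matrix.of_apply, Efun_cons]
        ring_nf
        rw [← mul_add, h1]
        simpa using (key (Sum.inl x) (Efun false l)).symm ▸ rfl
      · simp only [List.map_cons, List.prod_cons, Matrix.mul_apply, Fin.sum_univ_two, Zm,
          Matrix.cons_val', Matrix.cons_val_zero, Matrix.cons_val_one, Matrix.head_cons,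
          Matrix.empty_val', Matrix.cons_val_fin_one, Matrix.head_fin_const, Matrix.of_apply, Efun_cons]
        ring_nf
        rw [← mul_add, h0]
        simpa using (key (Sum.inr x) (Efun true l)).symm ▸ rfl

lemma Efun_interleave (n : ℕ) : ∀ (b : Bool) (xs ys : List ℕ),
    xs.length + ys.length ≤ n → ys.length ≤ xs.length → xs.length ≤ ys.length + 1 →
    Efun b (interleave xs ys) =
      (xs.map (fun i => Finsupp.single (if b then Sum.inl i else Sum.inr i) 1)).sum +
      (ys.map (fun i => Finsupp.single (if b then Sum.inr i else Sum.inl i) 1)).sum := by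
  induction n with
  | zero =>
      intro b xs ys h h1 h2
      have hx : xs = [] := List.length_eq_zero_iff.mp (by omega)
      have hy : ys = [] := List.length_eq_zero_iff.mp (by omega)
      subst hx; subst hy
      simp [interleave, Efun_nil]
  | succ n ih =>
      intro b xs ys h h1 h2
      cases xs with
      | nil =>
          have hy : ys = [] := List.length_eq_zero_iff.mp (Nat.le_zero.mp (by simpa using h1))
          subst hy
          simp [interleave, Efun_nil]
      | cons x xs =>
          rw [interleave, Efun_cons,
            ih (!b) ys xs (by simp at h ⊢; omega) (by simp at h2 ⊢; omega)
              (by simp at h1 ⊢; omega)]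
          cases b <;> simp <;> abel

lemma toMultiset_sum_single {α : Type*} (f : ℕ → α) (xs : List ℕ) :
    Finsupp.toMultiset ((xs.map (fun i => Finsupp.single (f i) 1)).sum) = ↑(xs.map f) := by
  induction xs with
  | nil => simp
  | cons x xs ih => simp [ih]

lemma filterMap_const_none {α β : Type*} (l : List α) :
    l.filterMap (fun _ => (none : Option β)) = [] := by
  induction l <;> simp_all

theorem generic_offdiag_linear_independent (D : Type*) [CommRing D] [IsDomain D] :
    let A := MvPolynomial (ℕ ⊕ ℕ) D
    let β : ℕ → A := fun i => X (Sum.inl i)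
    let γ : ℕ → A := fun i => X (Sum.inr i)
    let Z : ℕ → Matrix (Fin 2) (Fin 2) A := fun i => !![0, β i; γ i, 0]
    LinearIndependent D
      (fun p : {p : List ℕ × List ℕ //
          p.1.Pairwise (· ≤ ·) ∧ p.2.Pairwise (· ≤ ·) ∧
          (p.1.length = p.2.length ∨ p.1.length = p.2.length + 1)} =>
        (((interleave p.1.1 p.1.2).map Z).prod : Matrix (Fin 2) (Fin 2) A)) := by
  intro A β γ Z
  set ι := {p : List ℕ × List ℕ //
      p.1.Pairwise (· ≤ ·) ∧ p.2.Pairwise (· ≤ ·) ∧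
      (p.1.length = p.2.length ∨ p.1.length = p.2.length + 1)}
  have hZ : Z = Zm D := rfl
  -- the exponent map
  set m : ι → ((ℕ ⊕ ℕ) →₀ ℕ) := fun p => Efun true (interleave p.1.1 p.1.2) with hm
  -- m expressed via sums of singles
  have hmval : ∀ p : ι,
      m p = ((p.1.1.map (fun i => Finsupp.single (Sum.inl i) 1)).sum +
             (p.1.2.map (fun i => Finsupp.single (Sum.inr i) 1)).sum) := by
    intro ⟨⟨xs, ys⟩, hxs, hys, hlen⟩
    dsimp only at hlen ⊢
    have h1 : ys.length ≤ xs.length := by omega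
    have h2 : xs.length ≤ ys.length + 1 := by omega
    simpa using Efun_interleave (xs.length + ys.length) true xs ys le_rfl h1 h2
  -- injectivity of m
  have minj : Function.Injective m := by
    intro p q hpq
    obtain ⟨⟨xs, ys⟩, hxs, hys, hlen⟩ := p
    obtain ⟨⟨xs', ys'⟩, hxs', hys', hlen'⟩ := q
    rw [hmval, hmval] at hpq
    simp only at hpq
    have hmul := congrArg Finsupp.toMultiset hpq
    rw [map_add, map_add, toMultiset_sum_single, toMultiset_sum_single,
      toMultiset_sum_single, toMultiset_sum_single, Multiset.coe_add,
      Multiset.coe_add, Multiset.coe_eq_coe] at hmul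
    have hL := hmul.filterMap Sum.getLeft?
    have hR := hmul.filterMap Sum.getRight?
    simp only [List.filterMap_append, List.filterMap_map, Function.comp_def,
      Sum.getLeft?, Sum.getRight?, List.filterMap_some, List.filterMap_nil, filterMap_const_none,
      List.append_nil, List.nil_append] at hL hR
    have hx : xs = xs' := List.Perm.eq_of_pairwise' hxs hxs' hL
    have hy : ys = ys' := List.Perm.eq_of_pairwise' hys hys' hR
    subst hx; subst hy; rfl
  -- the linear functional picking the top row sum
  let Φ : Matrix (Fin 2) (Fin 2) A →ₗ[D] A :=
    { toFun := fun M => M 0 0 + M 0 1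
      map_add' := by intro M N; simp [Matrix.add_apply]; ring
      map_smul' := by intro c M; simp [Matrix.smul_apply, smul_add] }
  apply LinearIndependent.of_comp Φ
  have hcomp : (Φ ∘ fun p : ι =>
      (((interleave p.1.1 p.1.2).map Z).prod : Matrix (Fin 2) (Fin 2) A)) =
      fun p : ι => (monomial (m p) (1 : D) : A) := by
    funext p
    simpa [Φ, hZ, hm] using (Zprod_entries D (interleave p.1.1 p.1.2)).1
  rw [hcomp]
  have hbasis : (fun p : ι => (monomial (m p) (1 : D) : A)) =
      (basisMonomials (ℕ ⊕ ℕ) D) ∘ m := by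
    funext p; simp [coe_basisMonomials]
  rw [hbasis]
  exact (basisMonomials (ℕ ⊕ ℕ) D).linearIndependent.comp m minj
end

section
/- (Higman's lemma, finite sequence version) If (A, ≤) is a partially well ordered set, then the set V(A) of finite sequences over A, ordered by u ≤_s v iff v has a subsequence that majorizes u element-wise, is partially well ordered. -/
theorem higman_lemma_lists {A : Type*} [PartialOrder A]
    (hA : ∀ a : ℕ → A, ∃ i j : ℕ, i < j ∧ a i ≤ a j) :
    ∀ f : ℕ → List A, ∃ i j : ℕ, i < j ∧
      ∃ w : List A, List.Forall₂ (· ≤ ·) (f i) w ∧ w.Sublist (f j) := by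
  intro f
  have hs : (Set.univ : Set A).PartiallyWellOrderedOn (· ≤ ·) := fun a => hA (fun n => (a n : A))
  have := hs.partiallyWellOrderedOn_sublistForall₂ (r := (· ≤ ·))
  obtain ⟨i, j, hij, h⟩ := this (fun n => ⟨f n, fun x _ => Set.mem_univ x⟩)
  exact ⟨i, j, hij, List.sublistForall₂_iff.mp h⟩
end

section
/- Let D be a Noetherian commutative ring and M a D-module with a basis B that is linearly well-ordered by ≤ and partially well-ordered by a second order ≤', and suppose a monoid S acts on M by D-linear maps such that: for all f with leading monomial m and any m' ∈ B with m ≤' m', there is s ∈ S with the leading monomial of s·f equal to m' and the same leading coefficient. Then every S-invariant ascending chain of S-invariant submodules of M stabilizes; in particular there is no strictly increasing infinite chain of S-invariant submodules. -/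
/-- Submodule of elements whose support is bounded by `m` w.r.t. `le`. -/
def degLE {D M ι : Type*} [CommRing D] [AddCommGroup M] [Module D M]
    (b : Module.Basis ι D M) (le : ι → ι → Prop) (m : ι) : Submodule D M where
  carrier := {f | ∀ i ∈ (b.repr f).support, le i m}
  add_mem' := by
    intro f g hf hg i hi
    classical
    rw [map_add] at hi
    rcases Finset.mem_union.1 (Finsupp.support_add hi) with h | h
    exacts [hf i h, hg i h]
  zero_mem' := by simp
  smul_mem' := by
    intro c f hf i hi
    rw [map_smul] at hi
    exact hf i (Finsupp.support_smul hi)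

/-- The "leading coefficient ideal" of `V` at monomial `m`. -/
noncomputable def lcI {D M ι : Type*} [CommRing D] [AddCommGroup M] [Module D M]
    (b : Module.Basis ι D M) (le : ι → ι → Prop) (V : Submodule D M) (m : ι) : Ideal D :=
  Submodule.map ((Finsupp.lapply m).comp (b.repr : M →ₗ[D] ι →₀ D)) (V ⊓ degLE b le m)

lemma mem_lcI {D M ι : Type*} [CommRing D] [AddCommGroup M] [Module D M]
    (b : Module.Basis ι D M) (le : ι → ι → Prop) (V : Submodule D M) (m : ι) (c : D) :
    c ∈ lcI b le V m ↔
      ∃ f, (f ∈ V ∧ ∀ i ∈ (b.repr f).support, le i m) ∧ b.repr f m = c := by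
  simp only [lcI, Submodule.mem_map, Submodule.mem_inf, LinearMap.coe_comp,
    Function.comp_apply, Finsupp.lapply_apply, LinearEquiv.coe_coe]
  exact Iff.rfl

/-- Auxiliary recursively-defined sequence. -/
def seqRec (T : ℕ → ℕ) : ℕ → ℕ
  | 0 => T 0
  | j + 1 => T (seqRec T j + 1)

theorem specht_abstract
    (D : Type*) [CommRing D] [IsNoetherianRing D]
    (M : Type*) [AddCommGroup M] [Module D M]
    (ι : Type*) (b : Module.Basis ι D M)
    (le le' : ι → ι → Prop)
    -- (ι, le) is a linear well-order
    (hle_total : ∀ i j, le i j ∨ le j i)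
    (hle_antisymm : ∀ i j, le i j → le j i → i = j)
    (hle_trans : ∀ i j k, le i j → le j k → le i k)
    (hle_wo : ∀ S : Set ι, S.Nonempty → ∃ m ∈ S, ∀ i ∈ S, le m i)
    -- (ι, le') is a partial well-order
    (hle'_refl : ∀ i, le' i i)
    (hle'_antisymm : ∀ i j, le' i j → le' j i → i = j)
    (hle'_trans : ∀ i j k, le' i j → le' j k → le' i k)
    (hle'_pwo : ∀ a : ℕ → ι, ∃ i j : ℕ, i < j ∧ le' (a i) (a j))
    -- leading monomial and leading coefficient with respect to le
    (lm : M → ι) (lc : M → D)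
    (hlm : ∀ f : M, f ≠ 0 →
      lm f ∈ (b.repr f).support ∧ ∀ i ∈ (b.repr f).support, le i (lm f))
    (hlc : ∀ f : M, f ≠ 0 → lc f = b.repr f (lm f))
    -- the acting monoid of D-linear maps
    (S : Submonoid (Module.End D M))
    -- realizability of le'-larger leading monomials by the action of S
    (hS : ∀ f : M, f ≠ 0 → ∀ m' : ι, le' (lm f) m' →
      ∃ s ∈ S, s f ≠ 0 ∧ lm (s f) = m' ∧ lc (s f) = lc f) :
    ∀ N : ℕ → Submodule D M,
      Monotone N →
      (∀ n, ∀ s ∈ S, ∀ x ∈ N n, s x ∈ N n) →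
      ∃ k : ℕ, ∀ n ≥ k, N n = N k := by
  intro N hmono hinv
  -- Monotonicity of lcI in the submodule
  have hImono : ∀ (m : ι) (V W : Submodule D M), V ≤ W → lcI b le V m ≤ lcI b le W m := by
    intro m V W h
    exact Submodule.map_mono (inf_le_inf_right _ h)
  -- (P2): on S-invariant submodules, lcI is monotone along le'
  have hIle' : ∀ (n : ℕ) (m m' : ι), le' m m' →
      lcI b le (N n) m ≤ lcI b le (N n) m' := by
    intro n m m' hmm' c hc
    rw [mem_lcI] at hc
    obtain ⟨f, ⟨hfV, hfdeg⟩, hfc⟩ := hc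
    by_cases hc0 : c = 0
    · subst hc0; exact (lcI b le (N n) m').zero_mem
    have hf0 : f ≠ 0 := by
      rintro rfl
      simp at hfc
      exact hc0 hfc.symm
    obtain ⟨hsup, hmax⟩ := hlm f hf0
    have hmsup : m ∈ (b.repr f).support := by
      rw [Finsupp.mem_support_iff, hfc]; exact hc0
    have hlmf : lm f = m := hle_antisymm _ _ (hfdeg _ hsup) (hmax _ hmsup)
    obtain ⟨s, hsS, hsf0, hslm, hslc⟩ := hS f hf0 m' (hlmf ▸ hmm')
    rw [mem_lcI]
    refine ⟨s f, ⟨hinv n s hsS f hfV, ?_⟩, ?_⟩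
    · intro i hi
      exact hslm ▸ (hlm (s f) hsf0).2 i hi
    · have := hlc (s f) hsf0
      rw [hslm] at this
      rw [← this, hslc, hlc f hf0, hlmf, hfc]
  -- (P3): if all leading coefficient ideals of W are inside those of V
  -- and V ≤ W then W ≤ V
  have key : ∀ V W : Submodule D M, V ≤ W →
      (∀ m, lcI b le W m ≤ lcI b le V m) → ∀ w ∈ W, w ∈ V := by
    intro V W hVW hIm
    by_contra h
    push_neg at h
    obtain ⟨w0, hw0W, hw0V⟩ := h
    obtain ⟨m0, ⟨w, hwW, hwV, hlmw⟩, hmin⟩ :=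
      hle_wo {i : ι | ∃ w, w ∈ W ∧ w ∉ V ∧ lm w = i} ⟨lm w0, w0, hw0W, hw0V, rfl⟩
    have hw0 : w ≠ 0 := fun h => hwV (h ▸ V.zero_mem)
    obtain ⟨hsup, hmax⟩ := hlm w hw0
    have h1 : b.repr w m0 ∈ lcI b le W m0 := by
      rw [mem_lcI]
      exact ⟨w, ⟨hwW, fun i hi => hlmw ▸ hmax i hi⟩, rfl⟩
    obtain ⟨f, ⟨hfV, hfdeg⟩, hfc⟩ := (mem_lcI ..).1 (hIm m0 h1)
    have hdW : w - f ∈ W := W.sub_mem hwW (hVW hfV)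
    have hdV : w - f ∉ V := by
      intro h
      exact hwV (by simpa using V.add_mem h hfV)
    have hdne : w - f ≠ 0 := fun h => hdV (h ▸ V.zero_mem)
    have hle1 : le m0 (lm (w - f)) := hmin _ ⟨w - f, hdW, hdV, rfl⟩
    obtain ⟨hsup', hmax'⟩ := hlm (w - f) hdne
    have hco : b.repr (w - f) m0 = 0 := by
      rw [map_sub, Finsupp.sub_apply, hfc, sub_self]
    have hsub : ∀ i ∈ (b.repr (w - f)).support, le i m0 := by
      intro i hi
      rw [map_sub] at hi
      classical
      rcases Finset.mem_union.1 (Finsupp.support_sub hi) with h | h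
      · exact hlmw ▸ hmax i h
      · exact hfdeg i h
    have : lm (w - f) = m0 := hle_antisymm _ _ (hsub _ hsup') hle1
    rw [this, Finsupp.mem_support_iff] at hsup'
    exact hsup' hco
  -- Key combinatorial lemma: Noetherian + pwo
  have keyNoeth : ∀ (mm : ℕ → ι) (cc : ℕ → D),
      ∃ j, cc j ∈ Ideal.span {d | ∃ i, i < j ∧ le' (mm i) (mm j) ∧ cc i = d} := by
    intro mm cc
    by_contra h
    push_neg at h
    haveI : IsRefl ι le' := ⟨hle'_refl⟩
    haveI : IsTrans ι le' := ⟨fun a b c => hle'_trans a b c⟩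
    haveI : IsPreorder ι le' := {}
    have hpwo : (Set.univ : Set ι).PartiallyWellOrderedOn le' :=
      fun f => hle'_pwo (fun n => (f n).1)
    obtain ⟨g, hg⟩ := hpwo.exists_monotone_subseq (f := mm) (fun n => Set.mem_univ _)
    set J : ℕ →o Ideal D :=
      ⟨fun k => Ideal.span ((cc ∘ g) '' Set.Iic k),
        fun a b' hab => Ideal.span_mono (Set.image_mono (Set.Iic_subset_Iic.2 hab))⟩ with hJ
    obtain ⟨n, hn⟩ := monotone_stabilizes_iff_noetherian.mpr inferInstance J
    have h1 : cc (g (n + 1)) ∈ J (n + 1) :=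
      Ideal.subset_span ⟨n + 1, Set.mem_Iic.2 (le_refl _), rfl⟩
    rw [← hn (n + 1) (Nat.le_succ n)] at h1
    have h2 : (J n : Ideal D) ≤
        Ideal.span {d | ∃ i, i < g (n + 1) ∧ le' (mm i) (mm (g (n + 1))) ∧ cc i = d} := by
      apply Ideal.span_mono
      rintro d ⟨i, hi, rfl⟩
      exact ⟨g i, g.strictMono (Nat.lt_succ_of_le hi), hg i (n + 1) (Nat.le_succ_of_le hi), rfl⟩
    exact h (g (n + 1)) (h2 h1)
  -- Main argument by contradiction
  by_contra hcon
  push_neg at hcon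
  -- jumps exist arbitrarily far out
  have hjump : ∀ k, ∃ t ≥ k, N t ≠ N (t + 1) := by
    intro k
    obtain ⟨n, hn, hne⟩ := hcon k
    by_contra h
    push_neg at h
    have hall : ∀ j, N k = N (k + j) := by
      intro j
      induction j with
      | zero => rfl
      | succ j ih => rw [ih]; exact h (k + j) (Nat.le_add_right _ _)
    have := hall (n - k)
    rw [Nat.add_sub_cancel' hn] at this
    exact hne this.symm
  choose T hT1 hT2 using hjump
  set t : ℕ → ℕ := seqRec T with htdef
  have ht_ne : ∀ j, N (t j) ≠ N (t j + 1) := by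
    intro j
    cases j with
    | zero => exact hT2 0
    | succ j => exact hT2 (t j + 1)
  have ht_mono : StrictMono t := by
    apply strictMono_nat_of_lt_succ
    intro j
    have : t (j + 1) = T (t j + 1) := rfl
    rw [this]
    exact Nat.lt_of_succ_le (hT1 (t j + 1))
  -- for each jump pick a monomial and new leading coefficient
  have hpick : ∀ j, ∃ (m : ι) (c : D),
      c ∈ lcI b le (N (t j + 1)) m ∧ c ∉ lcI b le (N (t j)) m := by
    intro j
    have hle_j : N (t j) ≤ N (t j + 1) := hmono (Nat.le_succ _)
    by_contra h
    push_neg at h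
    have hIm : ∀ m, lcI b le (N (t j + 1)) m ≤ lcI b le (N (t j)) m :=
      fun m c hc => h m c hc
    have := key (N (t j)) (N (t j + 1)) hle_j hIm
    exact ht_ne j (le_antisymm hle_j this)
  choose mm cc hc1 hc2 using hpick
  obtain ⟨j, hj⟩ := keyNoeth mm cc
  have hspan : Ideal.span {d | ∃ i, i < j ∧ le' (mm i) (mm j) ∧ cc i = d} ≤
      lcI b le (N (t j)) (mm j) := by
    rw [Ideal.span_le]
    rintro d ⟨i, hij, hle'i, rfl⟩
    have h1 : cc i ∈ lcI b le (N (t i + 1)) (mm i) := hc1 i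
    have h2 : lcI b le (N (t i + 1)) (mm i) ≤ lcI b le (N (t j)) (mm i) :=
      hImono _ _ _ (hmono (Nat.succ_le_of_lt (ht_mono hij)))
    exact hIle' (t j) (mm i) (mm j) hle'i (h2 h1)
  exact hc2 j (hspan hj)
end
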